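/- Define Λ(x) = 1 for x ≤ 1 and Λ(x) = 0 for x > 1. Then ΛVaR(c) = min(c, 1) for every constant c ∈ ℝ, and ΛVaR is not star-shaped: ΛVaR(1) = 1 > (1/2)ΛVaR(2) + (1/2)ΛVaR(0) = 1/2. -/
import Mathlib

open MeasureTheory

variable {Ω : Type*} [MeasurableSpace Ω]

/-- `ΛVaR(X) = inf {x ∈ ℝ : P(X ≤ x) ≥ Λ(x)}`. -/
noncomputable def LVaR (μ : Measure Ω) (Λ : ℝ → ℝ) (X : Ω → ℝ) : ℝ :=
  sInf {x : ℝ | Λ x ≤ (μ {ω | X ω ≤ x}).toReal}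

lemma const_meas (μ : Measure Ω) [IsProbabilityMeasure μ] (c x : ℝ) :
    (μ {ω : Ω | (fun _ : Ω => c) ω ≤ x}).toReal = if c ≤ x then 1 else 0 := by
  by_cases h : c ≤ x
  · simp [h, Set.setOf_true, measure_univ]
  · simp [h, Set.setOf_false]

lemma key (μ : Measure Ω) [IsProbabilityMeasure μ] (c : ℝ) :
    LVaR μ (fun x => if x ≤ 1 then (1 : ℝ) else 0) (fun _ : Ω => c) = min c 1 := by
  unfold LVaR
  have hset : ∀ x : ℝ, ((if x ≤ 1 then (1:ℝ) else 0) ≤ (μ {ω : Ω | (fun _ : Ω => c) ω ≤ x}).toReal)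
      ↔ (1 < x ∨ c ≤ x) := by
    intro x
    rw [const_meas μ c x]
    by_cases h1 : x ≤ 1
    · by_cases hc : c ≤ x
      · simp [h1, hc]
      · rw [if_pos h1, if_neg hc]
        constructor
        · intro h; linarith
        · rintro (h | h) <;> [linarith; exact absurd h hc]
    · rw [if_neg h1]
      constructor
      · intro _; left; linarith
      · intro _; split <;> norm_num
  by_cases hc : c ≤ 1
  · have : {x : ℝ | (if x ≤ 1 then (1:ℝ) else 0) ≤ (μ {ω : Ω | (fun _ : Ω => c) ω ≤ x}).toReal}
        = Set.Ici c := by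
      ext x
      rw [Set.mem_setOf_eq, hset x]
      constructor
      · rintro (h | h) <;> simp only [Set.mem_Ici] <;> linarith
      · intro h; exact Or.inr h
    rw [this, csInf_Ici, min_eq_left hc]
  · have : {x : ℝ | (if x ≤ 1 then (1:ℝ) else 0) ≤ (μ {ω : Ω | (fun _ : Ω => c) ω ≤ x}).toReal}
        = Set.Ioi 1 := by
      ext x
      rw [Set.mem_setOf_eq, hset x]
      constructor
      · rintro (h | h); · exact h
        · simp only [Set.mem_Ioi]; linarith
      · intro h; exact Or.inl h
    rw [this, csInf_Ioi, min_eq_right (le_of_not_ge hc)]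

theorem LVaR_not_starShaped (μ : Measure Ω) [IsProbabilityMeasure μ] :
    (∀ c : ℝ,
      LVaR μ (fun x => if x ≤ 1 then (1 : ℝ) else 0) (fun _ : Ω => c) = min c 1) ∧
    LVaR μ (fun x => if x ≤ 1 then (1 : ℝ) else 0) (fun _ : Ω => (1 : ℝ)) = 1 ∧
    (1 / 2) * LVaR μ (fun x => if x ≤ 1 then (1 : ℝ) else 0) (fun _ : Ω => (2 : ℝ))
      + (1 / 2) * LVaR μ (fun x => if x ≤ 1 then (1 : ℝ) else 0) (fun _ : Ω => (0 : ℝ))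
      = 1 / 2 ∧
    (1 : ℝ) > 1 / 2 := by
  refine ⟨key μ, ?_, ?_, by norm_num⟩
  · rw [key μ 1]; norm_num
  · rw [key μ 2, key μ 0]; norm_num
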